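/- Let (p,q,m) = (3,1,3), so w(y) = √2 · sech(y), and let λ ∈ ℝ with λ ≠ 3 and χ ∈ ℝ with χ ≠ 0. Suppose ψ : ℝ → ℝ is twice continuously differentiable, ψ and ψ' are bounded and tend to 0 as |y| → ∞, and ψ satisfies (L₀ − λ)ψ = w³. Suppose further that for some c ≠ 0 the function φ = c·ψ satisfies the scalar NLEP: φ'' − φ + 3 w² φ − 3·χ·w³·(∫_ℝ w²φ dy)/(∫_ℝ w³ dy) = λφ. Then λ satisfies the explicit algebraic equation 1/χ = (9/2)/(3 − λ). -/

import Mathlib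

open MeasureTheory Real Filter

/-- The homoclinic solution of the core problem for `p = 3`: `w(y) = √2 sech(y)`. -/
noncomputable def w3 (y : ℝ) : ℝ := Real.sqrt 2 / Real.cosh y


noncomputable def Th (y : ℝ) : ℝ := Real.sinh y / Real.cosh y

lemma cosh_ne (y : ℝ) : Real.cosh y ≠ 0 := (Real.cosh_pos y).ne'

lemma w3_pos (y : ℝ) : 0 < w3 y :=
  div_pos (Real.sqrt_pos.2 two_pos) (Real.cosh_pos y)

lemma w3_le (y : ℝ) : w3 y ≤ Real.sqrt 2 := by
  rw [w3, div_le_iff₀ (Real.cosh_pos y)]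
  nlinarith [Real.one_le_cosh y, Real.sqrt_nonneg 2]

lemma w3_sq (y : ℝ) : w3 y ^ 2 = 2 / Real.cosh y ^ 2 := by
  rw [w3, div_pow, Real.sq_sqrt (by norm_num : (2:ℝ) ≥ 0)]

lemma Th_sq (y : ℝ) : Th y ^ 2 = 1 - w3 y ^ 2 / 2 := by
  rw [Th, w3_sq, div_pow]
  have h := Real.cosh_sq_sub_sinh_sq y
  have hc := (Real.cosh_pos y).ne'
  field_simp
  nlinarith [sq_nonneg (Real.cosh y)]

lemma abs_Th_le (y : ℝ) : |Th y| ≤ 1 := by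
  have h := Th_sq y
  have h2 := sq_nonneg (w3 y)
  rw [abs_le]
  constructor <;> nlinarith [sq_nonneg (Th y + 1), sq_nonneg (Th y - 1)]

lemma hasDerivAt_w3 (y : ℝ) : HasDerivAt w3 (-(w3 y * Th y)) y := by
  have h := (hasDerivAt_const y (Real.sqrt 2)).div (Real.hasDerivAt_cosh y) (cosh_ne y)
  refine h.congr_deriv ?_
  symm
  rw [w3, Th]
  field_simp
  ring

lemma hasDerivAt_Th (y : ℝ) : HasDerivAt Th (w3 y ^ 2 / 2) y := by
  have h := (Real.hasDerivAt_sinh y).div (Real.hasDerivAt_cosh y) (cosh_ne y)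
  refine h.congr_deriv ?_
  symm
  rw [w3_sq]
  have h := Real.cosh_sq_sub_sinh_sq y
  field_simp
  nlinarith [sq_nonneg (Real.cosh y)]

lemma continuous_w3 : Continuous w3 :=
  continuous_const.div Real.continuous_cosh cosh_ne

lemma integrable_w3sq : Integrable (fun y : ℝ => w3 y ^ 2) := by
  have hcont : Continuous (fun y : ℝ => w3 y ^ 2) := continuous_w3.pow 2
  apply integrable_of_intervalIntegral_norm_bounded (l := atTop (α := ℕ))
    (a := fun i : ℕ => -(i : ℝ)) (b := fun i : ℕ => (i : ℝ)) 4
  · intro i; exact hcont.integrableOn_Ioc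
  · exact tendsto_neg_atBot_iff.mpr tendsto_natCast_atTop_atTop
  · exact tendsto_natCast_atTop_atTop
  · filter_upwards with i
    have key : ∀ a b : ℝ, (∫ x in a..b, ‖w3 x ^ 2‖) = 2 * Th b - 2 * Th a := by
      intro a b
      have : (∫ x in a..b, ‖w3 x ^ 2‖) = ∫ x in a..b, w3 x ^ 2 := by
        congr 1; funext x
        exact abs_of_nonneg (sq_nonneg _)
      rw [this]
      exact intervalIntegral.integral_eq_sub_of_hasDerivAt
        (f := fun y => 2 * Th y)
        (fun x _ => by
          have := (hasDerivAt_Th x).const_mul 2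
          exact this.congr_deriv (by ring))
        (hcont.intervalIntegrable a b)
    rw [key]
    have h1 := abs_Th_le (i : ℝ)
    have h2 := abs_Th_le (-(i : ℝ))
    rw [abs_le] at h1 h2
    linarith [h1.1, h1.2, h2.1, h2.2]

lemma tendsto_cosh_atTop : Tendsto Real.cosh atTop atTop := by
  apply tendsto_atTop_mono (fun x => ?_) (Real.tendsto_exp_atTop.atTop_div_const two_pos)
  rw [Real.cosh_eq]
  have := (Real.exp_pos (-x)).le
  linarith

lemma tendsto_cosh_atBot : Tendsto Real.cosh atBot atTop := by
  apply tendsto_atTop_mono (fun x => ?_)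
    ((Real.tendsto_exp_atTop.comp tendsto_neg_atBot_atTop).atTop_div_const two_pos)
  rw [Real.cosh_eq]
  have := (Real.exp_pos x).le
  simp only [Function.comp_apply]
  linarith

lemma tendsto_w3_atTop : Tendsto w3 atTop (nhds 0) := by
  have := tendsto_const_nhds (x := Real.sqrt 2) (f := atTop (α := ℝ)) |>.div_atTop tendsto_cosh_atTop
  exact this

lemma tendsto_w3_atBot : Tendsto w3 atBot (nhds 0) :=
  tendsto_const_nhds.div_atTop tendsto_cosh_atBot

lemma integrable_bdd_mul_w3sq {g : ℝ → ℝ} (hg : Continuous g) (C : ℝ)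
    (hC : ∀ y, |g y| ≤ C) : Integrable (fun y => g y * w3 y ^ 2) :=
  integrable_w3sq.bdd_mul (c := C) hg.aestronglyMeasurable (ae_of_all _ fun y => by
    simpa [Real.norm_eq_abs] using hC y)

lemma integrable_w3_cube : Integrable (fun y => w3 y ^ 3) := by
  have : (fun y => w3 y ^ 3) = fun y => w3 y * w3 y ^ 2 := funext fun y => by ring
  rw [this]
  exact integrable_bdd_mul_w3sq continuous_w3 (Real.sqrt 2)
    (fun y => by rw [abs_of_pos (w3_pos y)]; exact w3_le y)

lemma integrable_w3_five : Integrable (fun y => w3 y ^ 5) := by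
  have : (fun y => w3 y ^ 5) = fun y => w3 y ^ 3 * w3 y ^ 2 := funext fun y => by ring
  rw [this]
  refine integrable_bdd_mul_w3sq (continuous_w3.pow 3) (Real.sqrt 2 ^ 3) (fun y => ?_)
  rw [abs_of_pos (pow_pos (w3_pos y) 3)]
  exact pow_le_pow_left₀ (w3_pos y).le (w3_le y) 3

lemma integral_F' : ∫ y : ℝ, (2 * w3 y ^ 5 - 3 * w3 y ^ 3) = 0 := by
  have hF' : ∀ y : ℝ, HasDerivAt (fun y => w3 y ^ 3 * Th y)
      (2 * w3 y ^ 5 - 3 * w3 y ^ 3) y := by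
    intro y
    have h := ((hasDerivAt_w3 y).pow 3).mul (hasDerivAt_Th y)
    refine h.congr_deriv ?_
    symm
    simp only [Pi.pow_apply]
    linear_combination (3 * w3 y ^ 3) * Th_sq y
  have hbound : ∀ y : ℝ, ‖w3 y ^ 3 * Th y‖ ≤ w3 y ^ 3 := by
    intro y
    rw [Real.norm_eq_abs, abs_mul, abs_of_pos (pow_pos (w3_pos y) 3)]
    nlinarith [abs_Th_le y, pow_pos (w3_pos y) 3, abs_nonneg (Th y)]
  have htop : Tendsto (fun y => w3 y ^ 3 * Th y) atTop (nhds 0) := by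
    apply squeeze_zero_norm hbound
    have := tendsto_w3_atTop.pow 3
    simpa using this
  have hbot : Tendsto (fun y => w3 y ^ 3 * Th y) atBot (nhds 0) := by
    apply squeeze_zero_norm hbound
    have := tendsto_w3_atBot.pow 3
    simpa using this
  have := MeasureTheory.integral_of_hasDerivAt_of_tendsto hF'
    ((integrable_w3_five.const_mul 2).sub (integrable_w3_cube.const_mul 3)) hbot htop
  simpa using this

/-- For the explicitly solvable exponent set `(p,q,m,s) = (3,1,3,0)`, the NLEP
eigenvalues satisfy `1/χ = (9/2)/(3 - λ)`. -/
theorem NLEP_explicitly_solvable (lam : ℝ) (hlam : lam ≠ 3) (χ : ℝ) (hχ : χ ≠ 0)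
    (ψ : ℝ → ℝ) (hψ : ContDiff ℝ 2 ψ)
    (hψ_bdd : ∃ C : ℝ, ∀ y : ℝ, |ψ y| ≤ C ∧ |deriv ψ y| ≤ C)
    (hψ_lim : Tendsto ψ (cocompact ℝ) (nhds 0))
    (hψ'_lim : Tendsto (deriv ψ) (cocompact ℝ) (nhds 0))
    (hψ_eq : ∀ y : ℝ,
      deriv (deriv ψ) y - ψ y + 3 * (w3 y) ^ 2 * ψ y - lam * ψ y = (w3 y) ^ 3)
    (c : ℝ) (hc : c ≠ 0) (φ : ℝ → ℝ) (hφ : φ = fun y => c * ψ y)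
    (hNLEP : ∀ y : ℝ,
      deriv (deriv φ) y - φ y + 3 * (w3 y) ^ 2 * φ y -
        3 * χ * (w3 y) ^ 3 * (∫ t : ℝ, (w3 t) ^ 2 * φ t) / (∫ t : ℝ, (w3 t) ^ 3)
        = lam * φ y) :
    1 / χ = (9 / 2) / (3 - lam) := by
  obtain ⟨C, hC⟩ := hψ_bdd
  have hd1 : Differentiable ℝ ψ := hψ.differentiable (by norm_num)
  have hψ2 : ContDiff ℝ (1 + 1) ψ := by
    norm_num
    exact hψ
  have hψ'C1 : ContDiff ℝ 1 (deriv ψ) := (contDiff_succ_iff_deriv.mp hψ2).2.2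
  have hd2 : Differentiable ℝ (deriv ψ) := hψ'C1.differentiable (by norm_num)
  -- integrability facts
  have intK : Integrable (fun y => w3 y ^ 2 * ψ y) := by
    have : (fun y => w3 y ^ 2 * ψ y) = fun y => ψ y * w3 y ^ 2 :=
      funext fun y => by ring
    rw [this]
    exact integrable_bdd_mul_w3sq hψ.continuous C (fun y => (hC y).1)
  set K := ∫ y : ℝ, w3 y ^ 2 * ψ y with hKdef
  set P := ∫ y : ℝ, w3 y ^ 5 with hPdef
  set J := ∫ y : ℝ, w3 y ^ 3 with hJdef
  -- Step 1: pointwise relation from the two equations at y = 0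
  have hI : (∫ t : ℝ, w3 t ^ 2 * φ t) = c * K := by
    rw [hφ]
    have : (fun t => w3 t ^ 2 * (c * ψ t)) = fun t => c * (w3 t ^ 2 * ψ t) :=
      funext fun t => by ring
    rw [this, integral_const_mul]
  have hdφ : deriv φ = fun y => c * deriv ψ y := by
    rw [hφ]; funext y
    exact deriv_const_mul c (hd1 y)
  have hddφ : deriv (deriv φ) 0 = c * deriv (deriv ψ) 0 := by
    rw [hdφ]
    exact deriv_const_mul c (hd2 0)
  have key : 3 * χ * w3 0 ^ 3 * (c * K) / J = c * w3 0 ^ 3 := by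
    have h0 := hNLEP 0
    rw [hI, hddφ, hφ] at h0
    simp only at h0
    linear_combination c * hψ_eq 0 - h0
  have hcw : c * w3 0 ^ 3 ≠ 0 :=
    mul_ne_zero hc (pow_pos (w3_pos 0) 3).ne'
  have hJ0 : J ≠ 0 := by
    intro h
    rw [h, div_zero] at key
    exact hcw key.symm
  have hJK : J = 3 * χ * K := by
    have h5 : c * w3 0 ^ 3 * (3 * χ * K) = c * w3 0 ^ 3 * J := by
      field_simp at key
      linear_combination c * key
    exact (mul_left_cancel₀ hcw h5).symm
  -- Step 2: 2P = 3J
  have hPJ : 2 * P - 3 * J = 0 := by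
    rw [hPdef, hJdef, ← integral_const_mul, ← integral_const_mul,
      ← integral_sub (integrable_w3_five.const_mul 2) (integrable_w3_cube.const_mul 3)]
    exact integral_F'
  -- Step 3: (lam - 3) * K + P = 0 via FTC for G
  have hG' : ∀ y : ℝ, HasDerivAt
      (fun y => w3 y ^ 2 * deriv ψ y + 2 * w3 y ^ 2 * Th y * ψ y)
      ((lam - 3) * (w3 y ^ 2 * ψ y) + w3 y ^ 5) y := by
    intro y
    have h1 := ((hasDerivAt_w3 y).pow 2).mul (hd2 y).hasDerivAt
    have h2 := ((((hasDerivAt_w3 y).pow 2).const_mul 2).mul (hasDerivAt_Th y)).mul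
      (hd1 y).hasDerivAt
    have h := h1.add h2
    refine h.congr_deriv ?_
    symm
    simp only [Pi.pow_apply, Pi.mul_apply]
    linear_combination (-(w3 y ^ 2)) * hψ_eq y + (4 * w3 y ^ 2 * ψ y) * Th_sq y
  have hC0 : 0 ≤ C := le_trans (abs_nonneg _) (hC 0).1
  have hGbound : ∀ y : ℝ,
      ‖w3 y ^ 2 * deriv ψ y + 2 * w3 y ^ 2 * Th y * ψ y‖ ≤ 3 * C * w3 y ^ 2 := by
    intro y
    have h1 := (hC y).1
    have h2 := (hC y).2
    have h3 := abs_Th_le y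
    have h4 := sq_nonneg (w3 y)
    rw [Real.norm_eq_abs]
    calc |w3 y ^ 2 * deriv ψ y + 2 * w3 y ^ 2 * Th y * ψ y|
        ≤ |w3 y ^ 2 * deriv ψ y| + |2 * w3 y ^ 2 * Th y * ψ y| := abs_add_le _ _
      _ ≤ w3 y ^ 2 * C + 2 * w3 y ^ 2 * C := by
          gcongr ?_ + ?_
          · rw [abs_mul, abs_of_nonneg h4]
            exact mul_le_mul_of_nonneg_left h2 h4
          · rw [abs_mul, abs_mul, abs_mul]
            rw [abs_of_nonneg (by norm_num : (0:ℝ) ≤ 2), abs_of_nonneg h4]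
            have hm : |Th y| * |ψ y| ≤ 1 * C :=
              mul_le_mul h3 h1 (abs_nonneg _) zero_le_one
            nlinarith [abs_nonneg (ψ y), abs_nonneg (Th y)]
      _ = 3 * C * w3 y ^ 2 := by ring
  have hsqtop : Tendsto (fun y => 3 * C * w3 y ^ 2) atTop (nhds 0) := by
    have := (tendsto_w3_atTop.pow 2).const_mul (3 * C)
    simpa using this
  have hsqbot : Tendsto (fun y => 3 * C * w3 y ^ 2) atBot (nhds 0) := by
    have := (tendsto_w3_atBot.pow 2).const_mul (3 * C)
    simpa using this
  have hGtop : Tendsto (fun y => w3 y ^ 2 * deriv ψ y + 2 * w3 y ^ 2 * Th y * ψ y)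
      atTop (nhds 0) := squeeze_zero_norm hGbound hsqtop
  have hGbot : Tendsto (fun y => w3 y ^ 2 * deriv ψ y + 2 * w3 y ^ 2 * Th y * ψ y)
      atBot (nhds 0) := squeeze_zero_norm hGbound hsqbot
  have intG' : Integrable (fun y => (lam - 3) * (w3 y ^ 2 * ψ y) + w3 y ^ 5) :=
    (intK.const_mul _).add integrable_w3_five
  have hKP : (lam - 3) * K + P = 0 := by
    have h := MeasureTheory.integral_of_hasDerivAt_of_tendsto hG' intG' hGbot hGtop
    rw [integral_add (intK.const_mul _) integrable_w3_five, integral_const_mul] at h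
    simpa using h
  -- Step 4: algebra
  have hK0 : K ≠ 0 := by
    intro h
    rw [h, mul_zero] at hJK
    exact hJ0 hJK
  have hlamval : 3 - lam = 9 / 2 * χ := by
    have h6 : K * (2 * (3 - lam) - 9 * χ) = 0 := by
      linear_combination (-2 : ℝ) * hKP + hPJ + 3 * hJK
    rcases mul_eq_zero.mp h6 with h | h
    · exact absurd h hK0
    · linarith
  rw [hlamval]
  field_simp
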